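/- For u, u' ∈ ℂ \ {0,-1} with u' ∉ {u, 1/u}, the matrices ρ_u(T) and ρ_{u'}(T) are not conjugate in GL(4,ℂ); consequently the representations ρ_u and ρ_{u'} are not conjugate. -/
import Mathlib


noncomputable section

/-- The tautological representation of Bi(3): image of T. -/
def rhoT (u : ℂ) : Matrix (Fin 4) (Fin 4) ℂ :=
  !![1, 0, 0, 0;
     -(2 - u + u^2)/u^2, 1/u + u, -1, 1/u + u;
     0, 1, 0, 0;
     0, 0, 0, 1]

/-- The tautological representation of Bi(3): image of U. -/
def rhoU (u : ℂ) : Matrix (Fin 4) (Fin 4) ℂ :=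
  !![1 + u, 0, 0, -u;
     -2/(u + u^2), 1/(1 + u), 1/(1 + u), -u/(1 + u);
     -(2 + u + u^2)/(u^2 + u^3), -1/(1 + u), (1 + u + u^2)/(u + u^2), 1/(u + u^2);
     1, 0, 0, 0]

/-- The tautological representation of Bi(3): image of A. -/
def rhoA (u : ℂ) : Matrix (Fin 4) (Fin 4) ℂ :=
  !![1, 0, 0, 0;
     0, 0, 0, 1;
     -(2 - u + u^2)/u^2, 1/u + u, -1, 1/u + u;
     0, 1, 0, 0]

/-- The tautological representation of Bi(3): image of L. -/
def rhoL (u : ℂ) : Matrix (Fin 4) (Fin 4) ℂ :=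
  !![(-1 + u)/(1 + u), -u^2/(1 + u), u/(1 + u), -u^2/(1 + u);
     -2/(u + u^2), 1/(1 + u), 1/(1 + u), -u/(1 + u);
     -(2 + u + u^2)/u^2, 1/u, 0, 1/u;
     -2/(u + u^2), -u/(1 + u), 1/(1 + u), 1/(1 + u)]

/-- for u, u' ∈ ℂ \ {0,-1} with u' ∉ {u, 1/u}, ρ_u(T) and ρ_{u'}(T) are
not conjugate in GL(4,ℂ); consequently the representations ρ_u and ρ_{u'} are not
conjugate. -/
theorem rho_u_not_conjugate (u u' : ℂ) (hu0 : u ≠ 0) (hu1 : u ≠ -1)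
    (hu'0 : u' ≠ 0) (hu'1 : u' ≠ -1) (hne : u' ≠ u) (hne' : u' ≠ 1/u) :
    (¬ ∃ P : Matrix (Fin 4) (Fin 4) ℂ, IsUnit P ∧ P * rhoT u * P⁻¹ = rhoT u') ∧
    (¬ ∃ P : Matrix (Fin 4) (Fin 4) ℂ, IsUnit P ∧
        P * rhoT u * P⁻¹ = rhoT u' ∧ P * rhoU u * P⁻¹ = rhoU u' ∧
        P * rhoA u * P⁻¹ = rhoA u' ∧ P * rhoL u * P⁻¹ = rhoL u') := by
  have key : ¬ ∃ P : Matrix (Fin 4) (Fin 4) ℂ, IsUnit P ∧ P * rhoT u * P⁻¹ = rhoT u' := by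
    rintro ⟨P, hP, hEq⟩
    have hdet : IsUnit P.det := (Matrix.isUnit_iff_isUnit_det P).mp hP
    have htr : (rhoT u').trace = (rhoT u).trace := by
      rw [← hEq, Matrix.trace_mul_comm, ← Matrix.mul_assoc, Matrix.nonsing_inv_mul P hdet,
        Matrix.one_mul]
    have h1 : (rhoT u).trace = 2 + (1/u + u) := by
      rw [Matrix.trace]
      simp [rhoT, Fin.sum_univ_four, Matrix.diag]
      ring
    have h2 : (rhoT u').trace = 2 + (1/u' + u') := by
      rw [Matrix.trace]
      simp [rhoT, Fin.sum_univ_four, Matrix.diag]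
      ring
    rw [h1, h2] at htr
    have huu' : u * u' ≠ 1 := by
      intro h
      apply hne'
      field_simp
      linear_combination h
    have : (u' - u) * (u * u' - 1) = 0 := by
      field_simp at htr
      linear_combination htr
    rcases mul_eq_zero.mp this with h | h
    · exact hne (sub_eq_zero.mp h)
    · exact huu' (by linear_combination h)
  exact ⟨key, fun ⟨P, hP, h1, _⟩ => key ⟨P, hP, h1⟩⟩

end
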